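/- Let S and S̃ be n×n real matrices and ρ, ψ ∈ ℝ with ρ ≠ 0 and |ψ|·‖S̃‖ < 1 (operator norm). Suppose p ∈ ℝⁿ satisfies p = ρ·y + ψ·S·p, let r = ψ·(S̃ − S)·p, and define the warm-restarted iterates p̃⁽⁰⁾ = p, p̃⁽ᵗ⁾ = ρ·y + ψ·S̃·p̃⁽ᵗ⁻¹⁾. Then for every t ≥ 0, ‖p̃⁽ᵗ⁾ − p*‖ ≤ (|ψ|·‖S̃‖)ᵗ·‖r‖ / (1 − |ψ|·‖S̃‖), where p* = ρ·(I − ψ·S̃)⁻¹·y is the evolved generalized PageRank vector. -/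

import Mathlib

set_option maxHeartbeats 1000000
set_option synthInstance.maxHeartbeats 400000

/-- the warm-restarted iterates `p̃⁽⁰⁾ = p`,
`p̃⁽ᵗ⁾ = ρ·y + ψ·S̃·p̃⁽ᵗ⁻¹⁾`, where `p = ρ·y + ψ·S·p` and
`r = ψ·(S̃ − S)·p`, satisfy
`‖p̃⁽ᵗ⁾ − p*‖ ≤ (|ψ|·‖S̃‖)ᵗ·‖r‖ / (1 − |ψ|·‖S̃‖)` for all `t ≥ 0`, where
`p* = ρ·(I − ψ·S̃)⁻¹·y` is the evolved generalized PageRank vector. -/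
theorem stmt13 {n : ℕ} (S St : Matrix (Fin n) (Fin n) ℝ) (ρ ψ : ℝ)
    (hρ : ρ ≠ 0)
    (hψ : |ψ| * ‖Matrix.toEuclideanCLM (𝕜 := ℝ) St‖ < 1)
    (y p : EuclideanSpace ℝ (Fin n))
    (hp : p = ρ • y + ψ • (Matrix.toEuclideanCLM (𝕜 := ℝ) S) p)
    (r : EuclideanSpace ℝ (Fin n))
    (hr : r = ψ • (Matrix.toEuclideanCLM (𝕜 := ℝ) (St - S)) p)
    (pt : ℕ → EuclideanSpace ℝ (Fin n))
    (h0 : pt 0 = p)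
    (hrec : ∀ t : ℕ, pt (t + 1) = ρ • y + ψ • (Matrix.toEuclideanCLM (𝕜 := ℝ) St) (pt t)) :
    ∀ t : ℕ, ‖pt t - ρ • (Matrix.toEuclideanCLM (𝕜 := ℝ)
        (((1 : Matrix (Fin n) (Fin n) ℝ) - ψ • St)⁻¹)) y‖ ≤
      (|ψ| * ‖Matrix.toEuclideanCLM (𝕜 := ℝ) St‖) ^ t * ‖r‖ /
        (1 - |ψ| * ‖Matrix.toEuclideanCLM (𝕜 := ℝ) St‖) := by
  set A := Matrix.toEuclideanCLM (𝕜 := ℝ) St with hA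
  set B := Matrix.toEuclideanCLM (𝕜 := ℝ) S with hB
  set c := |ψ| * ‖A‖ with hc
  have hc0 : 0 ≤ c := mul_nonneg (abs_nonneg _) (norm_nonneg _)
  have h1c : 0 < 1 - c := by linarith
  -- the CLM 1 - ψ • A is a unit
  have hnorm : ‖ψ • A‖ < 1 := by
    calc ‖ψ • A‖ ≤ ‖ψ‖ * ‖A‖ := ContinuousLinearMap.opNorm_smul_le _ _
      _ = c := by rw [Real.norm_eq_abs, hc]
      _ < 1 := hψ
  have hunitA : IsUnit ((1 : EuclideanSpace ℝ (Fin n) →L[ℝ] EuclideanSpace ℝ (Fin n)) - ψ • A) :=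
    ⟨Units.oneSub (ψ • A) hnorm, rfl⟩
  set M := (1 : Matrix (Fin n) (Fin n) ℝ) - ψ • St with hM
  have heM : Matrix.toEuclideanCLM (𝕜 := ℝ) M = 1 - ψ • A := by
    simp [hM, map_sub, map_smul, hA]
  have hunitM : IsUnit M := by
    have := hunitA.map (Matrix.toEuclideanCLM (𝕜 := ℝ)).symm
    rwa [← heM, StarAlgEquiv.symm_apply_apply] at this
  have hdet : IsUnit M.det := (Matrix.isUnit_iff_isUnit_det M).mp hunitM
  have hMr : M * M⁻¹ = 1 := Matrix.mul_nonsing_inv M hdet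
  set pstar := ρ • (Matrix.toEuclideanCLM (𝕜 := ℝ) M⁻¹) y with hps
  set x := (Matrix.toEuclideanCLM (𝕜 := ℝ) M⁻¹) y with hx
  -- fixed point equation for pstar
  have h1 : (Matrix.toEuclideanCLM (𝕜 := ℝ) M) x = y := by
    have hmul : Matrix.toEuclideanCLM (𝕜 := ℝ) M * Matrix.toEuclideanCLM (𝕜 := ℝ) M⁻¹ = 1 := by
      rw [← map_mul, hMr, map_one]
    calc (Matrix.toEuclideanCLM (𝕜 := ℝ) M) x
        = (Matrix.toEuclideanCLM (𝕜 := ℝ) M * Matrix.toEuclideanCLM (𝕜 := ℝ) M⁻¹) y := rfl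
      _ = y := by rw [hmul]; rfl
  rw [heM] at h1
  simp only [ContinuousLinearMap.sub_apply, ContinuousLinearMap.one_apply,
    ContinuousLinearMap.smul_apply] at h1
  -- h1 : x - ψ • A x = y
  have hfix : pstar = ρ • y + ψ • A pstar := by
    rw [hps, ← h1, map_smul]
    module
  have hrr : r = ψ • (A p - B p) := by
    rw [hr, map_sub, ContinuousLinearMap.sub_apply, hA, hB]
  have hkey : p - pstar = ψ • (A p - A pstar) - r := by
    rw [hrr]
    conv_lhs => rw [hp, hfix]
    module
  have hAle : ∀ v : EuclideanSpace ℝ (Fin n), ‖ψ • (A v)‖ ≤ c * ‖v‖ := by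
    intro v
    rw [norm_smul, Real.norm_eq_abs, hc, mul_assoc]
    gcongr
    exact A.le_opNorm _
  have hbase : ‖p - pstar‖ ≤ ‖r‖ / (1 - c) := by
    have h2 : ‖p - pstar‖ ≤ c * ‖p - pstar‖ + ‖r‖ := by
      calc ‖p - pstar‖ = ‖ψ • (A p - A pstar) - r‖ := by rw [← hkey]
        _ ≤ ‖ψ • (A p - A pstar)‖ + ‖r‖ := norm_sub_le _ _
        _ ≤ c * ‖p - pstar‖ + ‖r‖ := by
            have := hAle (p - pstar)
            rw [map_sub] at this
            linarith
    rw [le_div_iff₀ h1c]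
    nlinarith [norm_nonneg r, norm_nonneg (p - pstar)]
  have hgeo : ∀ t : ℕ, ‖pt t - pstar‖ ≤ c ^ t * ‖p - pstar‖ := by
    intro t
    induction t with
    | zero => simp [h0]
    | succ t ih =>
      have hstep : pt (t + 1) - pstar = ψ • (A (pt t) - A pstar) := by
        rw [hrec t]
        conv_lhs => rw [hfix]
        module
      calc ‖pt (t + 1) - pstar‖ = ‖ψ • (A (pt t) - A pstar)‖ := by rw [hstep]
        _ ≤ c * ‖pt t - pstar‖ := by
            have := hAle (pt t - pstar)
            rw [map_sub] at this
            exact this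
        _ ≤ c * (c ^ t * ‖p - pstar‖) := by gcongr
        _ = c ^ (t + 1) * ‖p - pstar‖ := by ring
  intro t
  calc ‖pt t - pstar‖ ≤ c ^ t * ‖p - pstar‖ := hgeo t
    _ ≤ c ^ t * (‖r‖ / (1 - c)) := by gcongr
    _ = c ^ t * ‖r‖ / (1 - c) := by ring
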